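/- Let m ≥ 4 and write m = s² + d with s ≥ 1 and 0 ≤ d ≤ 2s. Define D(m) = s(s−1)(4s+1)/6 + (d(2s+1−d) if d ≤ s else d(4s−d) − s(2s−1)). Then D(m) ≥ (2/3)·(m−1)^{3/2} − 2m for all m ≥ 4. -/
import Mathlib

/-- Minimal a-value for types D_m, ²D_m, where m = s² + d, 0 ≤ d ≤ 2s. -/
def aDmin (s d : ℕ) : ℕ :=
  s * (s - 1) * (4 * s + 1) / 6 +
    (if d ≤ s then d * (2 * s + 1 - d) else d * (4 * s - d) - s * (2 * s - 1))

set_option maxHeartbeats 1000000 in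
/-- For `m ≥ 4` written as `m = s² + d` with `s ≥ 1`, `0 ≤ d ≤ 2s`, one has
`D(m) ≥ (2/3)·(m−1)^{3/2} − 2m`. -/
theorem stmt15 (m s d : ℕ) (hm : 4 ≤ m) (hs : 1 ≤ s) (hd : d ≤ 2 * s)
    (hdecomp : m = s ^ 2 + d) :
    (2 / 3 : ℝ) * ((m : ℝ) - 1) ^ ((3 : ℝ) / 2) - 2 * (m : ℝ) ≤ (aDmin s d : ℝ) := by
  have hs2 : 2 ≤ s := by
    rcases Nat.lt_or_ge s 2 with h | h
    · interval_cases s <;> omega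
    · exact h
  have key : 16 * ((m : ℤ) - 1) ^ 3 ≤ (6 * (aDmin s d : ℤ) + 12 * (m : ℤ)) ^ 2 := by
    subst hdecomp
    unfold aDmin
    set q := s * (s - 1) * (4 * s + 1) / 6 with hqdef
    have hqn : s * (s - 1) * (4 * s + 1) ≤ 6 * q + 5 := by
      rw [hqdef]; omega
    have hcast : ((s * (s - 1) * (4 * s + 1) : ℕ) : ℤ)
        = (s : ℤ) * ((s : ℤ) - 1) * (4 * (s : ℤ) + 1) := by
      push_cast [Nat.cast_sub hs]; ring
    have hq : (s : ℤ) * ((s : ℤ) - 1) * (4 * (s : ℤ) + 1) ≤ 6 * (q : ℤ) + 5 := by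
      rw [← hcast]; exact_mod_cast hqn
    have ha : (0 : ℤ) ≤ (s : ℤ) - 2 := by
      have : (2 : ℤ) ≤ (s : ℤ) := by exact_mod_cast hs2
      linarith
    rcases le_or_gt d s with h | h
    · -- case d ≤ s
      rw [if_pos h]
      have h1 : d ≤ 2 * s + 1 := by omega
      have he : (0 : ℤ) ≤ (d : ℤ) := Int.ofNat_nonneg d
      have hc : (0 : ℤ) ≤ (s : ℤ) - (d : ℤ) := by
        have : (d : ℤ) ≤ (s : ℤ) := by exact_mod_cast h
        linarith
      push_cast [Nat.cast_sub h1]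
      set P : ℤ := (s : ℤ) * ((s : ℤ) - 1) * (4 * (s : ℤ) + 1) - 5
        + 6 * ((d : ℤ) * (2 * (s : ℤ) + 1 - (d : ℤ))) + 12 * ((s : ℤ) ^ 2 + (d : ℤ))
        with hP
      have hP0 : 0 ≤ P := by
        rw [hP]
        nlinarith [ha, he, mul_nonneg ha he, mul_nonneg he hc,
          pow_nonneg ha 2, pow_nonneg ha 3]
      have hPle : P ≤ 6 * ((q : ℤ) + (d : ℤ) * (2 * (s : ℤ) + 1 - (d : ℤ)))
          + 12 * ((s : ℤ) ^ 2 + (d : ℤ)) := by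
        rw [hP]; linarith
      calc (16 : ℤ) * (((s : ℤ) ^ 2 + (d : ℤ)) - 1) ^ 3 ≤ P ^ 2 := by
            rw [hP]
            nlinarith [mul_nonneg (mul_nonneg (pow_nonneg ha 0) (pow_nonneg he 2)) hc,
              mul_nonneg (mul_nonneg (pow_nonneg ha 1) (pow_nonneg he 2)) hc,
              mul_nonneg (mul_nonneg (pow_nonneg ha 3) (pow_nonneg he 1)) hc,
              mul_nonneg (mul_nonneg (pow_nonneg ha 2) (pow_nonneg he 1)) hc,
              mul_nonneg (mul_nonneg (pow_nonneg ha 1) (pow_nonneg he 1)) hc,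
              mul_nonneg (mul_nonneg (pow_nonneg ha 0) (pow_nonneg he 1)) hc,
              mul_nonneg (pow_nonneg ha 0) (pow_nonneg he 1),
              mul_nonneg (pow_nonneg ha 0) (pow_nonneg he 4),
              mul_nonneg (pow_nonneg ha 1) (pow_nonneg he 0),
              mul_nonneg (pow_nonneg ha 1) (pow_nonneg he 1),
              mul_nonneg (pow_nonneg ha 2) (pow_nonneg he 0),
              mul_nonneg (pow_nonneg ha 2) (pow_nonneg he 1),
              mul_nonneg (pow_nonneg ha 3) (pow_nonneg he 0),
              mul_nonneg (pow_nonneg ha 3) (pow_nonneg he 1),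
              mul_nonneg (pow_nonneg ha 4) (pow_nonneg he 0),
              mul_nonneg (pow_nonneg ha 5) (pow_nonneg he 0)]
        _ ≤ (6 * ((q : ℤ) + (d : ℤ) * (2 * (s : ℤ) + 1 - (d : ℤ)))
              + 12 * ((s : ℤ) ^ 2 + (d : ℤ))) ^ 2 := by
            apply pow_le_pow_left₀ hP0 hPle
    · -- case s < d
      rw [if_neg (not_le.2 h)]
      have h1 : d ≤ 4 * s := by omega
      have h2 : 1 ≤ 2 * s := by omega
      have h3 : s * (2 * s - 1) ≤ d * (4 * s - d) := by
        have hv : 2 * s ≤ 4 * s - d := by omega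
        calc s * (2 * s - 1) ≤ s * (2 * s) := Nat.mul_le_mul_left _ (by omega)
          _ ≤ d * (2 * s) := Nat.mul_le_mul_right _ (by omega)
          _ ≤ d * (4 * s - d) := Nat.mul_le_mul_left _ hv
      have ha2 : (0 : ℤ) ≤ (d : ℤ) - (s : ℤ) - 1 := by
        have : (s : ℤ) < (d : ℤ) := by exact_mod_cast h
        linarith
      have hb : (0 : ℤ) ≤ 2 * (s : ℤ) - (d : ℤ) := by
        have : (d : ℤ) ≤ 2 * (s : ℤ) := by exact_mod_cast hd
        linarith
      push_cast [Nat.cast_sub h1, Nat.cast_sub h2, Nat.cast_sub h3]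
      set P : ℤ := (s : ℤ) * ((s : ℤ) - 1) * (4 * (s : ℤ) + 1) - 5
        + 6 * ((d : ℤ) * (4 * (s : ℤ) - (d : ℤ)) - (s : ℤ) * (2 * (s : ℤ) - 1))
        + 12 * ((s : ℤ) ^ 2 + (d : ℤ)) with hP
      have hP0 : 0 ≤ P := by
        rw [hP]
        nlinarith [ha2, hb, mul_nonneg ha2 hb, pow_nonneg ha2 2, pow_nonneg hb 2,
          pow_nonneg ha2 3, pow_nonneg hb 3,
          mul_nonneg (pow_nonneg ha2 2) hb, mul_nonneg ha2 (pow_nonneg hb 2)]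
      have hPle : P ≤ 6 * ((q : ℤ)
            + ((d : ℤ) * (4 * (s : ℤ) - (d : ℤ)) - (s : ℤ) * (2 * (s : ℤ) - 1)))
          + 12 * ((s : ℤ) ^ 2 + (d : ℤ)) := by
        rw [hP]; linarith
      calc (16 : ℤ) * (((s : ℤ) ^ 2 + (d : ℤ)) - 1) ^ 3 ≤ P ^ 2 := by
            rw [hP]
            nlinarith [mul_nonneg (pow_nonneg ha2 0) (pow_nonneg hb 1),
              mul_nonneg (pow_nonneg ha2 0) (pow_nonneg hb 2),
              mul_nonneg (pow_nonneg ha2 0) (pow_nonneg hb 3),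
              mul_nonneg (pow_nonneg ha2 0) (pow_nonneg hb 4),
              mul_nonneg (pow_nonneg ha2 0) (pow_nonneg hb 5),
              mul_nonneg (pow_nonneg ha2 1) (pow_nonneg hb 0),
              mul_nonneg (pow_nonneg ha2 1) (pow_nonneg hb 1),
              mul_nonneg (pow_nonneg ha2 1) (pow_nonneg hb 2),
              mul_nonneg (pow_nonneg ha2 1) (pow_nonneg hb 3),
              mul_nonneg (pow_nonneg ha2 1) (pow_nonneg hb 4),
              mul_nonneg (pow_nonneg ha2 2) (pow_nonneg hb 0),
              mul_nonneg (pow_nonneg ha2 2) (pow_nonneg hb 1),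
              mul_nonneg (pow_nonneg ha2 2) (pow_nonneg hb 2),
              mul_nonneg (pow_nonneg ha2 2) (pow_nonneg hb 3),
              mul_nonneg (pow_nonneg ha2 3) (pow_nonneg hb 0),
              mul_nonneg (pow_nonneg ha2 3) (pow_nonneg hb 1),
              mul_nonneg (pow_nonneg ha2 3) (pow_nonneg hb 2),
              mul_nonneg (pow_nonneg ha2 4) (pow_nonneg hb 0),
              mul_nonneg (pow_nonneg ha2 4) (pow_nonneg hb 1),
              mul_nonneg (pow_nonneg ha2 5) (pow_nonneg hb 0)]
        _ ≤ (6 * ((q : ℤ)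
              + ((d : ℤ) * (4 * (s : ℤ) - (d : ℤ)) - (s : ℤ) * (2 * (s : ℤ) - 1)))
              + 12 * ((s : ℤ) ^ 2 + (d : ℤ))) ^ 2 := by
            apply pow_le_pow_left₀ hP0 hPle
  -- from the integer inequality to the real statement
  have hm1 : (1 : ℝ) ≤ (m : ℝ) := by exact_mod_cast (by omega : 1 ≤ m)
  have hX : (0 : ℝ) ≤ (m : ℝ) - 1 := by linarith
  have keyR : 16 * ((m : ℝ) - 1) ^ 3 ≤ (6 * (aDmin s d : ℝ) + 12 * (m : ℝ)) ^ 2 := by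
    exact_mod_cast key
  have hpow : ((m : ℝ) - 1) ^ ((3 : ℝ) / 2) = Real.sqrt (((m : ℝ) - 1) ^ 3) := by
    rw [Real.sqrt_eq_rpow, ← Real.rpow_natCast ((m : ℝ) - 1) 3, ← Real.rpow_mul hX]
    norm_num
  rw [hpow]
  have hsq : Real.sqrt (((m : ℝ) - 1) ^ 3)
      ≤ (3 / 2) * ((aDmin s d : ℝ) + 2 * (m : ℝ)) := by
    rw [show ((3 : ℝ) / 2) * ((aDmin s d : ℝ) + 2 * (m : ℝ))
        = Real.sqrt ((((3 : ℝ) / 2) * ((aDmin s d : ℝ) + 2 * (m : ℝ))) ^ 2) from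
      (Real.sqrt_sq (by positivity)).symm]
    apply Real.sqrt_le_sqrt
    nlinarith [keyR]
  linarith
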